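/- If k is not a perfect field of characteristic p > 0, then there exists a maximal ideal m of k[x] (one variable) such that the homomorphism T_m from the completion of k[x]_m to F[[X]] is not an isomorphism. Concretely, for λ ∈ k not a p-th power, f(x) = x^p − λ is irreducible, and for m = (f), the induced map m_R/m_R² → (x−b)/(x−b)² is not an isomorphism, where b is the image of x in F = k[x]/(f). -/

import Mathlib

/-- If `k` is a non-perfect field of characteristic `p > 0`, witnessed by
`λ ∈ k` with no `p`-th root, then `f = x^p - λ` is irreducible, and for the maximal ideal
`m = (f)`, the map `T_m` is not an isomorphism: concretely, with `F = k[x]/(f)` and `b`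
the image of `x`, the induced map `k[x]/m² → F[x]/(x-b)²` (which on cotangent spaces is
`m_R/m_R² → (x-b)/(x-b)²`) is not bijective. -/
theorem not_perfect_completion_not_iso
    {k : Type*} [Field k] (p : ℕ) [Fact p.Prime] [CharP k p]
    (lam : k) (hlam : ∀ y : k, y ^ p ≠ lam)
    (f : Polynomial k) (hf : f = Polynomial.X ^ p - Polynomial.C lam)
    (m : Ideal (Polynomial k)) (hm : m = Ideal.span {f})
    (b : Polynomial k ⧸ Ideal.span ({f} : Set (Polynomial k)))
    (hb : b = Ideal.Quotient.mk (Ideal.span {f}) Polynomial.X)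
    (φ : Polynomial k →+* Polynomial (Polynomial k ⧸ Ideal.span ({f} : Set (Polynomial k))))
    (hφ : φ = Polynomial.mapRingHom
      (algebraMap k (Polynomial k ⧸ Ideal.span ({f} : Set (Polynomial k)))))
    (J : Ideal (Polynomial (Polynomial k ⧸ Ideal.span ({f} : Set (Polynomial k)))))
    (hJ : J = Ideal.span {Polynomial.X - Polynomial.C b}) :
    Irreducible f ∧
    ∀ (h : m ^ 2 ≤ (J ^ 2).comap φ),
      ¬ Function.Bijective (@Ideal.quotientMap _ _ _ _ _ (J ^ 2) _
        ⟨fun c hc ↦ mul_comm c _ ▸ (J ^ 2).smul_mem _ hc⟩ φ h) := by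
  classical
  have hp := Fact.out (p := p.Prime)
  have hirr : Irreducible f := by
    rw [hf]; exact X_pow_sub_C_irreducible_of_prime hp hlam
  refine ⟨hirr, fun h hbij => ?_⟩
  -- F has characteristic p
  have hne_top : Ideal.span ({f} : Set (Polynomial k)) ≠ ⊤ := by
    intro ht
    exact hirr.not_isUnit (Ideal.span_singleton_eq_top.mp ht)
  haveI : Nontrivial (Polynomial k ⧸ Ideal.span ({f} : Set (Polynomial k))) := Ideal.Quotient.nontrivial_iff.mpr hne_top
  have hinj : Function.Injective (algebraMap k (Polynomial k ⧸ Ideal.span ({f} : Set (Polynomial k)))) := (algebraMap k (Polynomial k ⧸ Ideal.span ({f} : Set (Polynomial k)))).injective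
  haveI : CharP (Polynomial k ⧸ Ideal.span ({f} : Set (Polynomial k))) p :=
    charP_of_injective_ringHom hinj p
  haveI : CharP (Polynomial (Polynomial k ⧸ Ideal.span ({f} : Set (Polynomial k)))) p :=
    charP_of_injective_ringHom (Polynomial.C_injective) p
  -- b ^ p = algebraMap k (Polynomial k ⧸ Ideal.span ({f} : Set (Polynomial k))) lam
  have hbp : b ^ p = algebraMap k (Polynomial k ⧸ Ideal.span ({f} : Set (Polynomial k))) lam := by
    have : algebraMap k (Polynomial k ⧸ Ideal.span ({f} : Set (Polynomial k))) lam = Ideal.Quotient.mk _ (Polynomial.C lam) := rfl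
    rw [hb, this, ← map_pow, ← sub_eq_zero, ← map_sub, Ideal.Quotient.eq_zero_iff_mem, ← hf]
    exact Ideal.subset_span rfl
  -- φ f = (X - C b) ^ p
  have hφf : φ f = (Polynomial.X - Polynomial.C b) ^ p := by
    have e1 : φ f = φ (Polynomial.X ^ p - Polynomial.C lam) := congrArg _ hf
    rw [e1, hφ, Polynomial.coe_mapRingHom, Polynomial.map_sub, Polynomial.map_pow,
      Polynomial.map_X, Polynomial.map_C, ← hbp, map_pow]
    exact (sub_pow_char (p := p) (Polynomial.X : Polynomial (Polynomial k ⧸ Ideal.span ({f} : Set (Polynomial k)))) (Polynomial.C b)).symm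
  -- hence φ f ∈ J ^ 2
  have hmem : φ f ∈ J ^ 2 := by
    haveI : (Ideal.span {Polynomial.X - Polynomial.C b}).IsTwoSided :=
      ⟨fun c hc ↦ mul_comm c _ ▸ (Ideal.span {Polynomial.X - Polynomial.C b}).smul_mem _ hc⟩
    rw [hJ, Ideal.span_singleton_pow]
    have hd : (Polynomial.X - Polynomial.C b) ^ 2 ∣ φ f := by
      rw [hφf]; exact pow_dvd_pow _ hp.two_le
    obtain ⟨c, hc⟩ := hd
    exact Ideal.mem_span_singleton'.mpr ⟨c, by rw [hc]; exact mul_comm c ((Polynomial.X - Polynomial.C b) ^ 2)⟩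
  -- but f ∉ m ^ 2
  have hf0 : f ≠ 0 := hirr.ne_zero
  have hdeg : f.natDegree = p := by
    rw [hf]; exact Polynomial.natDegree_X_pow_sub_C
  have hnotmem : f ∉ m ^ 2 := by
    rw [hm, Ideal.span_singleton_pow, Ideal.mem_span_singleton]
    intro hdvd
    have := Polynomial.natDegree_le_of_dvd hdvd hf0
    rw [Polynomial.natDegree_pow, hdeg] at this
    have := hp.pos
    omega
  -- contradiction with injectivity
  haveI : (J ^ 2).IsTwoSided := ⟨fun c hc ↦ mul_comm c _ ▸ (J ^ 2).smul_mem _ hc⟩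
  have hzero : Ideal.quotientMap (J ^ 2) φ h (Ideal.Quotient.mk (m ^ 2) f) = 0 := by
    rw [Ideal.quotientMap_mk, Ideal.Quotient.eq_zero_iff_mem]
    exact hmem
  have : Ideal.Quotient.mk (m ^ 2) f = 0 := by
    apply hbij.injective
    rw [hzero, map_zero]
  rw [Ideal.Quotient.eq_zero_iff_mem] at this
  exact hnotmem this
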